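/- Let X be a set and let 𝒜, ℬ be collections of subsets of X with 𝒜 almost-Γ-like and ℬ Γ-like. Then Player I has a winning (perfect-information) strategy in G₁(𝒜,ℬ) if and only if Player I has a winning predetermined strategy in G₁(𝒜,ℬ). -/
import Mathlib


open Set

/-- A collection `𝒜` of subsets of `X` is Γ-like if every member is infinite
and every infinite subset of a member is itself a member. -/
def GammaLike {X : Type*} (𝒜 : Set (Set X)) : Prop :=
  ∀ A ∈ 𝒜, A.Infinite ∧ ∀ A' ⊆ A, A'.Infinite → A' ∈ 𝒜

/-- A collection `𝒜` is almost-Γ-like if each `A ∈ 𝒜` has a countably infinite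
subset `A'` all of whose cofinite subsets belong to `𝒜`. -/
def AlmostGammaLike {X : Type*} (𝒜 : Set (Set X)) : Prop :=
  ∀ A ∈ 𝒜, ∃ A' ⊆ A, A'.Countable ∧ A'.Infinite ∧
    ∀ A'' ⊆ A', (A' \ A'').Finite → A'' ∈ 𝒜

/-- `𝒜` is closed under finite unions. -/
def UnionClosed {X : Type*} (𝒜 : Set (Set X)) : Prop :=
  ∀ A ∈ 𝒜, ∀ B ∈ 𝒜, A ∪ B ∈ 𝒜

/-- α₁(𝒜,ℬ): for every sequence from 𝒜 there is `B ∈ ℬ` with `A n \ B` finite for all `n`. -/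
def Alpha1 {X : Type*} (𝒜 ℬ : Set (Set X)) : Prop :=
  ∀ A : ℕ → Set X, (∀ n, A n ∈ 𝒜) → ∃ B ∈ ℬ, ∀ n, (A n \ B).Finite

/-- α₂(𝒜,ℬ): for every sequence from 𝒜 there is `B ∈ ℬ` meeting each `A n` infinitely. -/
def Alpha2 {X : Type*} (𝒜 ℬ : Set (Set X)) : Prop :=
  ∀ A : ℕ → Set X, (∀ n, A n ∈ 𝒜) → ∃ B ∈ ℬ, ∀ n, (A n ∩ B).Infinite

/-- α₂'(𝒜,ℬ): for every sequence from 𝒜 there is `B ∈ ℬ` meeting each `A n`. -/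
def Alpha2' {X : Type*} (𝒜 ℬ : Set (Set X)) : Prop :=
  ∀ A : ℕ → Set X, (∀ n, A n ∈ 𝒜) → ∃ B ∈ ℬ, ∀ n, (A n ∩ B).Nonempty

/-- α₃(𝒜,ℬ): for every sequence from 𝒜 there is `B ∈ ℬ` meeting infinitely many `A n` infinitely. -/
def Alpha3 {X : Type*} (𝒜 ℬ : Set (Set X)) : Prop :=
  ∀ A : ℕ → Set X, (∀ n, A n ∈ 𝒜) → ∃ B ∈ ℬ, {n | (A n ∩ B).Infinite}.Infinite

/-- α₄(𝒜,ℬ): for every sequence from 𝒜 there is `B ∈ ℬ` meeting infinitely many `A n`. -/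
def Alpha4 {X : Type*} (𝒜 ℬ : Set (Set X)) : Prop :=
  ∀ A : ℕ → Set X, (∀ n, A n ∈ 𝒜) → ∃ B ∈ ℬ, {n | (A n ∩ B).Nonempty}.Infinite

/-- α_{1.1}(𝒜,ℬ): α₁ restricted to pairwise disjoint sequences. -/
def Alpha1p1 {X : Type*} (𝒜 ℬ : Set (Set X)) : Prop :=
  ∀ A : ℕ → Set X, (∀ n, A n ∈ 𝒜) → (∀ m n, m ≠ n → Disjoint (A m) (A n)) →
    ∃ B ∈ ℬ, ∀ n, (A n \ B).Finite

/-- α_{1.5}(𝒜,ℬ): for pairwise disjoint sequences from 𝒜 there is `B ∈ ℬ` with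
`A n \ B` finite for infinitely many `n`. -/
def Alpha1p5 {X : Type*} (𝒜 ℬ : Set (Set X)) : Prop :=
  ∀ A : ℕ → Set X, (∀ n, A n ∈ 𝒜) → (∀ m n, m ≠ n → Disjoint (A m) (A n)) →
    ∃ B ∈ ℬ, {n | (A n \ B).Finite}.Infinite

/-- α_{2.1}(𝒜,ℬ): α₂ restricted to pairwise disjoint sequences. -/
def Alpha2p1 {X : Type*} (𝒜 ℬ : Set (Set X)) : Prop :=
  ∀ A : ℕ → Set X, (∀ n, A n ∈ 𝒜) → (∀ m n, m ≠ n → Disjoint (A m) (A n)) →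
    ∃ B ∈ ℬ, ∀ n, (A n ∩ B).Infinite

/-- α_{3.1}(𝒜,ℬ): α₃ restricted to pairwise disjoint sequences. -/
def Alpha3p1 {X : Type*} (𝒜 ℬ : Set (Set X)) : Prop :=
  ∀ A : ℕ → Set X, (∀ n, A n ∈ 𝒜) → (∀ m n, m ≠ n → Disjoint (A m) (A n)) →
    ∃ B ∈ ℬ, {n | (A n ∩ B).Infinite}.Infinite

/-- α_{4.1}(𝒜,ℬ): α₄ restricted to pairwise disjoint sequences. -/
def Alpha4p1 {X : Type*} (𝒜 ℬ : Set (Set X)) : Prop :=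
  ∀ A : ℕ → Set X, (∀ n, A n ∈ 𝒜) → (∀ m n, m ≠ n → Disjoint (A m) (A n)) →
    ∃ B ∈ ℬ, {n | (A n ∩ B).Nonempty}.Infinite

/-- Player I has a winning predetermined strategy in G₁(𝒜,ℬ). -/
def PredWinG1 {X : Type*} (𝒜 ℬ : Set (Set X)) : Prop :=
  ∃ A : ℕ → Set X, (∀ n, A n ∈ 𝒜) ∧
    ∀ a : ℕ → X, (∀ n, a n ∈ A n) → Set.range a ∉ ℬ

/-- Player I has a winning predetermined strategy in G_fin(𝒜,ℬ). -/
def PredWinGfin {X : Type*} (𝒜 ℬ : Set (Set X)) : Prop :=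
  ∃ A : ℕ → Set X, (∀ n, A n ∈ 𝒜) ∧
    ∀ F : ℕ → Set X, (∀ n, (F n).Finite ∧ F n ⊆ A n) → (⋃ n, F n) ∉ ℬ

/-- Player I has a winning predetermined strategy in G_{<2}(𝒜,ℬ),
where II picks at most one point each round. -/
def PredWinGlt2 {X : Type*} (𝒜 ℬ : Set (Set X)) : Prop :=
  ∃ A : ℕ → Set X, (∀ n, A n ∈ 𝒜) ∧
    ∀ F : ℕ → Set X, (∀ n, (F n).Subsingleton ∧ F n ⊆ A n) → (⋃ n, F n) ∉ ℬ

/-- Player I has a winning predetermined strategy in G_cf(𝒜,ℬ),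
where II picks a cofinite subset each round. -/
def PredWinGcf {X : Type*} (𝒜 ℬ : Set (Set X)) : Prop :=
  ∃ A : ℕ → Set X, (∀ n, A n ∈ 𝒜) ∧
    ∀ B : ℕ → Set X, (∀ n, B n ⊆ A n ∧ (A n \ B n).Finite) → (⋃ n, B n) ∉ ℬ

/-- Player I has a winning perfect-information strategy in G₁(𝒜,ℬ):
a function from finite sequences of points of X into 𝒜 defeating all counterplays. -/
def WinG1 {X : Type*} (𝒜 ℬ : Set (Set X)) : Prop :=
  ∃ σ : List X → Set X, (∀ s, σ s ∈ 𝒜) ∧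
    ∀ a : ℕ → X, (∀ n, a n ∈ σ (List.ofFn fun i : Fin n => a i)) → Set.range a ∉ ℬ

/-- Player I has a winning perfect-information strategy in G_fin(𝒜,ℬ):
a function from finite sequences of finite subsets of X into 𝒜 defeating all counterplays. -/
def WinGfin {X : Type*} (𝒜 ℬ : Set (Set X)) : Prop :=
  ∃ σ : List (Set X) → Set X, (∀ s : List (Set X), (∀ F ∈ s, F.Finite) → σ s ∈ 𝒜) ∧
    ∀ F : ℕ → Set X,
      (∀ n, (F n).Finite ∧ F n ⊆ σ (List.ofFn fun i : Fin n => F i)) →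
      (⋃ n, F n) ∉ ℬ

/-- Player I has a winning perfect-information strategy in G_{<2}(𝒜,ℬ):
a function from finite sequences of at-most-singleton subsets of X into 𝒜
defeating all counterplays. -/
def WinGlt2 {X : Type*} (𝒜 ℬ : Set (Set X)) : Prop :=
  ∃ σ : List (Set X) → Set X, (∀ s : List (Set X), (∀ F ∈ s, F.Subsingleton) → σ s ∈ 𝒜) ∧
    ∀ F : ℕ → Set X,
      (∀ n, (F n).Subsingleton ∧ F n ⊆ σ (List.ofFn fun i : Fin n => F i)) →
      (⋃ n, F n) ∉ ℬ

/-- Auxiliary: membership in the game tree, recorded on reversed lists. -/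
def treeRev {X : Type*} (C : List X → Set X) : List X → Prop
  | [] => True
  | x :: t => treeRev C t ∧ x ∈ C t.reverse

lemma treeRev_level_countable {X : Type*} (C : List X → Set X)
    (hC : ∀ s, (C s).Countable) :
    ∀ n, {t : List X | treeRev C t ∧ t.length = n}.Countable := by
  intro n
  induction n with
  | zero =>
    apply Set.Countable.mono _ (Set.countable_singleton ([] : List X))
    rintro t ⟨_, ht⟩
    simp [List.length_eq_zero_iff.mp ht]
  | succ n ih =>
    have hsub : {t : List X | treeRev C t ∧ t.length = n + 1} ⊆
        ⋃ t ∈ {t : List X | treeRev C t ∧ t.length = n},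
          (fun x => x :: t) '' C t.reverse := by
      rintro t ⟨ht, hl⟩
      cases t with
      | nil => simp at hl
      | cons x t =>
        obtain ⟨h1, h2⟩ := ht
        exact Set.mem_biUnion ⟨h1, by simpa using hl⟩ ⟨x, h2, rfl⟩
    exact Set.Countable.mono hsub
      (Set.Countable.biUnion ih fun t _ => (hC _).image _)

lemma treeRev_countable {X : Type*} (C : List X → Set X)
    (hC : ∀ s, (C s).Countable) :
    {s : List X | treeRev C s.reverse}.Countable := by
  have h1 : {t : List X | treeRev C t}.Countable := by
    have : {t : List X | treeRev C t} =
        ⋃ n, {t : List X | treeRev C t ∧ t.length = n} := by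
      ext t; simp
    rw [this]
    exact Set.countable_iUnion (treeRev_level_countable C hC)
  have : {s : List X | treeRev C s.reverse} ⊆
      List.reverse '' {t : List X | treeRev C t} := by
    intro s hs
    exact ⟨s.reverse, hs, List.reverse_reverse s⟩
  exact Set.Countable.mono this (h1.image _)

/-- Auxiliary: the list of moves generated by iterating `g`. -/
def playList {X : Type*} (g : List X → X) : ℕ → List X
  | 0 => []
  | k + 1 => playList g k ++ [g (playList g k)]

lemma playList_eq_ofFn {X : Type*} (g : List X → X) (k : ℕ) :
    playList g k = List.ofFn (fun i : Fin k => g (playList g i)) := by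
  induction k with
  | zero => simp [playList]
  | succ k ih =>
    rw [List.ofFn_succ']
    simp [playList, ih, List.concat_eq_append]

lemma mem_playList {X : Type*} (g : List X → X) :
    ∀ k j, j < k → g (playList g j) ∈ playList g k := by
  intro k
  induction k with
  | zero => intro j h; omega
  | succ k ih =>
    intro j h
    show _ ∈ playList g k ++ [g (playList g k)]
    rcases Nat.lt_succ_iff_lt_or_eq.mp h with h | h
    · exact List.mem_append_left _ (ih j h)
    · subst h; exact List.mem_append_right _ (List.mem_singleton_self _)

/-- If 𝒜 is almost-Γ-like and ℬ is Γ-like, Player I has a winning perfect-information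
strategy in G₁(𝒜,ℬ) iff Player I has a winning predetermined strategy there. -/
theorem stmt7 {X : Type*} (𝒜 ℬ : Set (Set X))
    (hA : AlmostGammaLike 𝒜) (hB : GammaLike ℬ) :
    WinG1 𝒜 ℬ ↔ PredWinG1 𝒜 ℬ := by
  constructor
  · rintro ⟨σ, hσA, hσwin⟩
    -- choose, for each position, a countable witness set
    choose C hCsub hCcount hCinf hCcof using fun s => hA (σ s) (hσA s)
    -- the tree of positions reachable using the C-sets
    set T : Set (List X) := {s : List X | treeRev C s.reverse} with hT
    have hTc : T.Countable := treeRev_countable C hCcount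
    have hTne : T.Nonempty := ⟨[], by constructor⟩
    obtain ⟨e, he⟩ := hTc.exists_eq_range hTne
    -- predetermined strategy
    refine ⟨fun n => C (e n) \ {x | x ∈ e n}, fun n => ?_, ?_⟩
    · refine hCcof (e n) _ Set.diff_subset ?_
      refine Set.Finite.subset (e n).finite_toSet ?_
      intro x hx
      simp only [Set.mem_diff, Set.mem_setOf_eq, not_and, not_not] at hx
      exact hx.2 hx.1
    · intro a ha hR
      -- index of a tree node in the enumeration
      have hidx : ∀ s ∈ T, ∃ n, e n = s := by
        intro s hs; rw [he] at hs; exact hs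
      classical
      set idx : List X → ℕ := fun s =>
        if h : s ∈ T then (hidx s h).choose else 0 with hidxdef
      have heidx : ∀ s ∈ T, e (idx s) = s := by
        intro s hs
        simp only [hidxdef, dif_pos hs]
        exact (hidx s hs).choose_spec
      set g : List X → X := fun s => a (idx s) with hg
      set b : ℕ → X := fun k => g (playList g k) with hbdef
      -- the constructed play stays in the tree
      have hkey : ∀ k, playList g k ∈ T := by
        intro k
        induction k with
        | zero => exact ⟨⟩
        | succ k ih =>
          have hm := ha (idx (playList g k))
          simp only [Set.mem_diff, Set.mem_setOf_eq] at hm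
          rw [heidx _ ih] at hm
          show treeRev C (playList g k ++ [g (playList g k)]).reverse
          have hrev : (playList g k ++ [g (playList g k)]).reverse
              = g (playList g k) :: (playList g k).reverse := by simp
          rw [hrev]
          exact ⟨ih, by rw [List.reverse_reverse]; exact hm.1⟩
      have hb : ∀ k, b k ∈ C (playList g k) \ {x | x ∈ playList g k} := by
        intro k
        have hm := ha (idx (playList g k))
        simp only [Set.mem_diff, Set.mem_setOf_eq] at hm
        rw [heidx _ (hkey k)] at hm
        exact hm
      have hbne : ∀ j k, j < k → b j ≠ b k := by
        intro j k hjk hbeq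
        have h1 : b j ∈ playList g k := mem_playList g k j hjk
        have h2 : b k ∉ {x | x ∈ playList g k} := (hb k).2
        rw [← hbeq] at h2
        exact h2 h1
      have hbinj : Function.Injective b := by
        intro j k hjk
        rcases lt_trichotomy j k with h | h | h
        · exact absurd hjk (hbne j k h)
        · exact h
        · exact absurd hjk.symm (hbne k j h)
      have hrangeb : Set.range b ∈ ℬ := by
        refine (hB _ hR).2 _ ?_ (Set.infinite_range_of_injective hbinj)
        rintro x ⟨k, rfl⟩
        exact ⟨idx (playList g k), rfl⟩
      refine hσwin b (fun k => ?_) hrangeb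
      have : b k ∈ C (playList g k) := (hb k).1
      have hC' := hCsub (playList g k) this
      rwa [playList_eq_ofFn] at hC'
  · rintro ⟨A, hAmem, hwin⟩
    refine ⟨fun s => A s.length, fun s => hAmem _, ?_⟩
    intro a ha
    apply hwin
    intro n
    have := ha n
    simpa using this
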